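/- Let n be an integer not divisible by ℓ^f + 1. Then there exist a ∈ {0,…,ℓ^f−2}, b ∈ {1,…,ℓ}^f and two distinct subsets B₁ ≠ B₂ of {0,…,f−1} with (a,b,B₁) ∈ T(n) and (a,b,B₂) ∈ T(n) if and only if there exist integers r ≥ 0 and m with (ℓ−1)·|m| ≤ ℓ^{f−1} − ℓ such that ℓ^r · n ≡ m (mod ℓ^f + 1). -/

import Mathlib

namespace Stmt10

/-- The set `T(n)` of triples `(a,b,B)` with `a ∈ {0,…,ℓ^f−2}`,
`b ∈ {1,…,ℓ}^f`, `B ⊆ {0,…,f−1}` and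
`n ≡ a(ℓ^f+1) + ∑_{i∈B} b_i ℓ^i + ∑_{i∉B} b_i ℓ^{f+i} (mod ℓ^{2f}−1)`. -/
def Tset (ℓ f : ℕ) (n : ℤ) : Set (ℤ × (Fin f → ℤ) × Finset (Fin f)) :=
  {x | (0 ≤ x.1 ∧ x.1 ≤ (ℓ : ℤ) ^ f - 2) ∧
    (∀ i, 1 ≤ x.2.1 i ∧ x.2.1 i ≤ (ℓ : ℤ)) ∧
    Int.ModEq ((ℓ : ℤ) ^ (2 * f) - 1) n
      (x.1 * ((ℓ : ℤ) ^ f + 1) + ∑ i ∈ x.2.2, x.2.1 i * (ℓ : ℤ) ^ (i : ℕ) +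
        ∑ i ∈ x.2.2ᶜ, x.2.1 i * (ℓ : ℤ) ^ (f + (i : ℕ)))}

open Finset
open Fin.NatCast

private lemma geom (L : ℤ) (t : ℕ) :
    (L - 1) * ∑ j ∈ range t, L ^ (j + 1) = L ^ (t + 1) - L := by
  induction t with
  | zero => simp
  | succ t ih => rw [sum_range_succ, mul_add, ih]; ring

private lemma sum_pow_le {F : ℕ} {L : ℤ} (hL : 2 ≤ L) (J : Finset (Fin F)) (t : ℕ)
    (h : ∀ i ∈ J, (i : ℕ) < t) :
    ∑ i ∈ J, L ^ ((i : ℕ) + 1) ≤ ∑ j ∈ range t, L ^ (j + 1) := by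
  have e : ∑ j ∈ J.image Fin.val, L ^ (j + 1) = ∑ i ∈ J, L ^ ((i : ℕ) + 1) :=
    Finset.sum_image (fun a _ b _ hab => Fin.val_injective hab)
  rw [← e]
  apply Finset.sum_le_sum_of_subset_of_nonneg
  · intro j hj
    rw [mem_image] at hj
    obtain ⟨i, hi, rfl⟩ := hj
    exact mem_range.mpr (h i hi)
  · intro j _ _
    exact pow_nonneg (by linarith) _

private lemma abs_sum_le' {F : ℕ} {L : ℤ} (hL : 2 ≤ L) (d : Fin F → ℤ)
    (hd : ∀ i, |d i| ≤ L) (J : Finset (Fin F)) :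
    |∑ i ∈ J, d i * L ^ (i : ℕ)| ≤ ∑ i ∈ J, L ^ ((i : ℕ) + 1) := by
  refine (Finset.abs_sum_le_sum_abs _ _).trans (Finset.sum_le_sum ?_)
  intro i _
  rw [abs_mul, abs_pow, abs_of_nonneg (by linarith : (0:ℤ) ≤ L), pow_succ,
    mul_comm (L ^ (i : ℕ)) L]
  exact mul_le_mul_of_nonneg_right (hd i) (pow_nonneg (by linarith) _)

private lemma rot {L : ℤ} {F : ℕ} (x : ℤ) (d : Fin (F+1) → ℤ) (J : Finset (Fin (F+1)))
    (hd : ∀ i, 1 ≤ |d i| ∧ |d i| ≤ L)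
    (h1 : (L ^ (F+1) + 1) ∣ x - ∑ i, d i * L ^ (i : ℕ))
    (h2 : (L ^ (F+1) + 1) ∣ ∑ i ∈ J, d i * L ^ (i : ℕ)) :
    ∃ d' : Fin (F+1) → ℤ, (∀ i, 1 ≤ |d' i| ∧ |d' i| ≤ L) ∧
      ((L ^ (F+1) + 1) ∣ L * x - ∑ i, d' i * L ^ (i : ℕ)) ∧
      ((L ^ (F+1) + 1) ∣ ∑ i ∈ J.image (· + 1), d' i * L ^ (i : ℕ)) := by
  classical
  set N := L ^ (F+1) + 1 with hN
  have key : ∀ i : Fin (F+1),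
      (if i + 1 = 0 then (-1:ℤ) else 1) * d (i + 1 - 1) * L ^ ((i + 1 : Fin (F+1)) : ℕ)
        = L * (d i * L ^ (i : ℕ)) - (if i = Fin.last F then d i * N else 0) := by
    intro i
    rw [add_sub_cancel_right]
    by_cases h : i = Fin.last F
    · subst h
      rw [Fin.last_add_one]
      simp only [if_pos rfl, Fin.val_zero, Fin.val_last, pow_zero, hN, ite_true,
        eq_self_iff_true, if_true]
      rw [pow_succ]
      ring
    · have hv : ((i + 1 : Fin (F+1)) : ℕ) = (i : ℕ) + 1 := by
        rw [Fin.val_add_one, if_neg h]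
      have hnz : i + 1 ≠ 0 := by
        intro hc
        have := Fin.val_add_one i
        rw [if_neg h, hc] at this
        simp at this
      rw [hv, if_neg hnz, if_neg h]
      rw [pow_succ]
      ring
  have hdvd_ite : ∀ i : Fin (F+1), i ∈ (univ : Finset (Fin (F+1))) →
      N ∣ (if i = Fin.last F then d i * N else 0) := by
    intro i _
    by_cases h : i = Fin.last F
    · rw [if_pos h]; exact dvd_mul_left N (d i)
    · rw [if_neg h]; exact dvd_zero N
  refine ⟨fun j => (if j = 0 then -1 else 1) * d (j - 1), ?_, ?_, ?_⟩
  · intro j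
    by_cases h : j = 0 <;> simp [h, abs_mul] <;> exact hd _
  · have e : ∑ j : Fin (F+1), (if j = 0 then (-1:ℤ) else 1) * d (j - 1) * L ^ (j : ℕ)
        = ∑ i : Fin (F+1), (if i + 1 = 0 then (-1:ℤ) else 1) * d (i + 1 - 1) * L ^ ((i + 1 : Fin (F+1)) : ℕ) :=
      (Fintype.sum_equiv (Equiv.addRight (1 : Fin (F+1))) _ _ (fun i => rfl)).symm
    rw [e]
    simp_rw [key]
    rw [Finset.sum_sub_distrib, ← Finset.mul_sum]
    have hre : L * x - (L * ∑ i, d i * L ^ (i : ℕ) - ∑ i : Fin (F+1), (if i = Fin.last F then d i * N else 0))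
        = L * (x - ∑ i, d i * L ^ (i : ℕ)) + ∑ i : Fin (F+1), (if i = Fin.last F then d i * N else 0) := by
      ring
    rw [hre]
    exact dvd_add (h1.mul_left L) (Finset.dvd_sum hdvd_ite)
  · have hinj : ∀ x ∈ J, ∀ y ∈ J, x + 1 = y + 1 → x = y :=
      fun a _ b _ h => add_left_injective 1 h
    rw [Finset.sum_image hinj]
    simp_rw [key]
    rw [Finset.sum_sub_distrib, ← Finset.mul_sum]
    exact dvd_sub (h2.mul_left L) (Finset.dvd_sum (fun i _ => hdvd_ite i (mem_univ i)))

private lemma rotIter {L : ℤ} {F : ℕ} :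
    ∀ (r : ℕ) (x : ℤ) (d : Fin (F+1) → ℤ) (J : Finset (Fin (F+1))),
    (∀ i, 1 ≤ |d i| ∧ |d i| ≤ L) →
    ((L ^ (F+1) + 1) ∣ x - ∑ i, d i * L ^ (i : ℕ)) →
    ((L ^ (F+1) + 1) ∣ ∑ i ∈ J, d i * L ^ (i : ℕ)) →
    ∃ d' : Fin (F+1) → ℤ, (∀ i, 1 ≤ |d' i| ∧ |d' i| ≤ L) ∧
      ((L ^ (F+1) + 1) ∣ L ^ r * x - ∑ i, d' i * L ^ (i : ℕ)) ∧
      ((L ^ (F+1) + 1) ∣ ∑ i ∈ J.image (· + (r : Fin (F+1))), d' i * L ^ (i : ℕ)) := by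
  intro r
  induction r with
  | zero =>
    intro x d J hd h1 h2
    refine ⟨d, hd, by simpa using h1, ?_⟩
    have : J.image (· + ((0 : ℕ) : Fin (F+1))) = J := by
      simp
    rwa [this]
  | succ r ih =>
    intro x d J hd h1 h2
    obtain ⟨d₁, hd₁, h11, h12⟩ := ih x d J hd h1 h2
    obtain ⟨d₂, hd₂, h21, h22⟩ := rot (L ^ r * x) d₁ (J.image (· + (r : Fin (F+1)))) hd₁ h11 h12
    refine ⟨d₂, hd₂, ?_, ?_⟩
    · have : L ^ (r + 1) * x = L * (L ^ r * x) := by ring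
      rwa [this]
    · have : (J.image (· + (r : Fin (F+1)))).image (· + 1)
          = J.image (· + ((r + 1 : ℕ) : Fin (F+1))) := by
        rw [Finset.image_image]
        apply Finset.image_congr
        intro i _
        show i + (r : Fin (F+1)) + 1 = i + ((r + 1 : ℕ) : Fin (F+1))
        push_cast
        rw [add_assoc]
      rwa [this] at h22

private lemma pick_pos {L : ℤ} (hL : 2 ≤ L) (t : ℕ) (ht : 1 ≤ t) (x : ℤ) (h1 : 0 < x)
    (h2 : (L - 1) * x ≤ L ^ (t + 2) - L) :
    ∃ e : ℤ, 1 ≤ |e| ∧ |e| ≤ L ∧ 1 ≤ |x - e * L ^ t| ∧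
      (L - 1) * |x - e * L ^ t| ≤ L ^ (t + 1) - L := by
  have hLt : (0:ℤ) < L ^ t := pow_pos (by linarith) t
  have hLt1 : L ≤ L ^ t := by
    calc L = L ^ 1 := (pow_one L).symm
    _ ≤ L ^ t := pow_le_pow_right₀ (by linarith) ht
  have hp1 : L ^ (t + 1) = L * L ^ t := by rw [pow_succ]; ring
  have hp2 : L ^ (t + 2) = L * (L * L ^ t) := by rw [pow_succ, pow_succ]; ring
  by_cases hc1 : x < L ^ t
  · refine ⟨1, by norm_num, by rw [abs_one]; linarith, ?_, ?_⟩
    · rw [one_mul, abs_of_neg (by linarith : x - L ^ t < 0)]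
      linarith
    · rw [one_mul, abs_of_neg (by linarith : x - L ^ t < 0)]
      nlinarith
  · push_neg at hc1
    by_cases hc2 : x ≤ L ^ (t + 1)
    · set e := x / L ^ t with he
      set rem := x % L ^ t with hrem
      have hx : L ^ t * e + rem = x := Int.mul_ediv_add_emod x (L ^ t)
      have hrem0 : 0 ≤ rem := Int.emod_nonneg x (by linarith)
      have hremlt : rem < L ^ t := Int.emod_lt_of_pos x hLt
      have he1 : 1 ≤ e := by
        rw [he, Int.le_ediv_iff_mul_le hLt, one_mul]
        exact hc1
      have heL : e ≤ L := by
        rw [he]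
        have : x / L ^ t ≤ L * L ^ t / L ^ t :=
          Int.ediv_le_ediv hLt (by linarith [hp1])
        rwa [Int.mul_ediv_cancel L (by linarith : L ^ t ≠ 0)] at this
      by_cases hr : 1 ≤ rem
      · refine ⟨e, ?_, ?_, ?_, ?_⟩
        · rw [abs_of_nonneg (by linarith)]; exact he1
        · rw [abs_of_nonneg (by linarith)]; exact heL
        · rw [abs_of_nonneg (by linarith : (0:ℤ) ≤ x - e * L ^ t)]
          linarith
        · rw [abs_of_nonneg (by linarith : (0:ℤ) ≤ x - e * L ^ t)]
          nlinarith
      · push_neg at hr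
        have hrem0' : rem = 0 := by omega
        by_cases hee : e ≤ L - 1
        · refine ⟨e + 1, ?_, ?_, ?_, ?_⟩
          · rw [abs_of_nonneg (by linarith)]; linarith
          · rw [abs_of_nonneg (by linarith)]; linarith
          · have : x - (e + 1) * L ^ t = -(L ^ t) := by nlinarith
            rw [this, abs_neg, abs_of_nonneg (by linarith)]
            linarith
          · have : x - (e + 1) * L ^ t = -(L ^ t) := by nlinarith
            rw [this, abs_neg, abs_of_nonneg (by linarith)]
            nlinarith
        · push_neg at hee
          have heL' : e = L := by omega
          refine ⟨L - 1, ?_, ?_, ?_, ?_⟩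
          · rw [abs_of_nonneg (by linarith)]; linarith
          · rw [abs_of_nonneg (by linarith)]; linarith
          · have : x - (L - 1) * L ^ t = L ^ t := by nlinarith
            rw [this, abs_of_nonneg (by linarith)]
            linarith
          · have : x - (L - 1) * L ^ t = L ^ t := by nlinarith
            rw [this, abs_of_nonneg (by linarith)]
            nlinarith
    · push_neg at hc2
      have hx0 : (0:ℤ) ≤ x - L * L ^ t := by linarith [hp1]
      refine ⟨L, ?_, ?_, ?_, ?_⟩
      · rw [abs_of_nonneg (by linarith)]; linarith
      · rw [abs_of_nonneg (by linarith)]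
      · rw [abs_of_nonneg hx0]
        linarith [hp1]
      · rw [abs_of_nonneg hx0]
        have e2 : (L - 1) * (x - L * L ^ t) = (L - 1) * x - L ^ (t+2) + L ^ (t+1) := by
          rw [hp1, hp2]; ring
        rw [e2]
        linarith

private lemma pick {L : ℤ} (hL : 2 ≤ L) (t : ℕ) (ht : 1 ≤ t) (x : ℤ) (h1 : 1 ≤ |x|)
    (h2 : (L - 1) * |x| ≤ L ^ (t + 2) - L) :
    ∃ e : ℤ, 1 ≤ |e| ∧ |e| ≤ L ∧ 1 ≤ |x - e * L ^ t| ∧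
      (L - 1) * |x - e * L ^ t| ≤ L ^ (t + 1) - L := by
  rcases lt_or_ge 0 x with hx | hx
  · rw [abs_of_pos hx] at h2
    exact pick_pos hL t ht x hx h2
  · have hxneg : x < 0 := by
      rcases hx.lt_or_eq with h | h
      · exact h
      · subst h; simp at h1
    rw [abs_of_neg hxneg] at h2
    obtain ⟨e, he1, he2, he3, he4⟩ := pick_pos hL t ht (-x) (by linarith) h2
    refine ⟨-e, by rwa [abs_neg], by rwa [abs_neg], ?_, ?_⟩
    · have : x - (-e) * L ^ t = -((-x) - e * L ^ t) := by ring
      rwa [this, abs_neg]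
    · have : x - (-e) * L ^ t = -((-x) - e * L ^ t) := by ring
      rwa [this, abs_neg]

private lemma digits {L : ℤ} (hL : 2 ≤ L) :
    ∀ t : ℕ, 1 ≤ t → ∀ x : ℤ, 1 ≤ |x| → (L - 1) * |x| ≤ L ^ (t + 1) - L →
    ∃ d : ℕ → ℤ, (∀ i, 1 ≤ |d i| ∧ |d i| ≤ L) ∧ ∑ i ∈ range t, d i * L ^ i = x := by
  intro t
  induction t with
  | zero => omega
  | succ t ih =>
    intro _ x h1 h2
    rcases Nat.eq_zero_or_pos t with ht0 | ht1
    · subst ht0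
      have hxL : |x| ≤ L := by
        have : (L - 1) * |x| ≤ (L - 1) * L := by
          calc (L-1) * |x| ≤ L ^ (0 + 1 + 1) - L := h2
          _ = (L - 1) * L := by ring
        exact le_of_mul_le_mul_left this (by linarith)
      refine ⟨fun i => if i = 0 then x else 1, ?_, by simp⟩
      intro i
      by_cases h : i = 0
      · simpa [h] using ⟨h1, hxL⟩
      · simp only [if_neg h, abs_one]
        exact ⟨le_refl 1, by linarith⟩
    · obtain ⟨e, he1, he2, he3, he4⟩ := pick hL t ht1 x h1 (by
        have : t + 2 = t + 1 + 1 := by ring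
        rw [this]; exact h2)
      obtain ⟨d₀, hd₀, hsum⟩ := ih ht1 (x - e * L ^ t) he3 he4
      refine ⟨fun i => if i = t then e else d₀ i, ?_, ?_⟩
      · intro i
        by_cases h : i = t
        · simpa [h] using ⟨he1, he2⟩
        · simpa [h] using hd₀ i
      · have hco : ∑ i ∈ range t, (if i = t then e else d₀ i) * L ^ i
            = ∑ i ∈ range t, d₀ i * L ^ i := by
          apply Finset.sum_congr rfl
          intro i hi
          have hit := Finset.mem_range.mp hi
          rw [if_neg (by omega : i ≠ t)]
        simp only [Finset.sum_range_succ]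
        rw [hco, hsum]
        norm_num

private lemma key1 {F : ℕ} (L : ℤ) (b : Fin (F+1) → ℤ) (B₁ : Finset (Fin (F+1)))
    (d : Fin (F+1) → ℤ) (hbd : ∀ i, d i = if i ∈ B₁ then b i else -(b i)) :
    ∑ i ∈ B₁, b i * L ^ (i : ℕ) + ∑ i ∈ B₁ᶜ, b i * L ^ ((F+1) + (i : ℕ))
      = ∑ i, d i * L ^ (i : ℕ) + (L ^ (F+1) + 1) * ∑ i ∈ B₁ᶜ, b i * L ^ (i : ℕ) := by
  classical
  have e0 : ∑ i, d i * L ^ (i : ℕ)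
      = ∑ i ∈ B₁, d i * L ^ (i : ℕ) + ∑ i ∈ B₁ᶜ, d i * L ^ (i : ℕ) :=
    (Finset.sum_add_sum_compl B₁ _).symm
  have e1 : ∑ i ∈ B₁, d i * L ^ (i : ℕ) = ∑ i ∈ B₁, b i * L ^ (i : ℕ) := by
    apply Finset.sum_congr rfl
    intro i hi
    rw [hbd i, if_pos hi]
  have e2 : ∑ i ∈ B₁ᶜ, b i * L ^ ((F+1) + (i : ℕ))
      = ∑ i ∈ B₁ᶜ, (d i * L ^ (i : ℕ) + (L ^ (F+1) + 1) * (b i * L ^ (i : ℕ))) := by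
    apply Finset.sum_congr rfl
    intro i hi
    rw [hbd i, if_neg (Finset.mem_compl.mp hi), pow_add]
    ring
  rw [e2, Finset.sum_add_distrib, ← Finset.mul_sum, e0, e1]
  ring

private lemma key2 {F : ℕ} (L : ℤ) (b : Fin (F+1) → ℤ) (B₁ B₂ : Finset (Fin (F+1)))
    (d : Fin (F+1) → ℤ) (hbd : ∀ i, d i = if i ∈ B₁ then b i else -(b i)) :
    (∑ i ∈ B₂, b i * L ^ (i : ℕ) + ∑ i ∈ B₂ᶜ, b i * L ^ ((F+1) + (i : ℕ)))
      - (∑ i ∈ B₁, b i * L ^ (i : ℕ) + ∑ i ∈ B₁ᶜ, b i * L ^ ((F+1) + (i : ℕ)))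
      = (L ^ (F+1) - 1) * ∑ i ∈ symmDiff B₁ B₂, d i * L ^ (i : ℕ) := by
  classical
  have hS : ∀ B : Finset (Fin (F+1)),
      ∑ i ∈ B, b i * L ^ (i : ℕ) + ∑ i ∈ Bᶜ, b i * L ^ ((F+1) + (i : ℕ))
      = ∑ i : Fin (F+1), (if i ∈ B then b i * L ^ (i : ℕ) else b i * L ^ ((F+1) + (i : ℕ))) := by
    intro B
    have e1 : Finset.univ.filter (fun i => i ∈ B) = B := by ext i; simp
    have e2 : Finset.univ.filter (fun i => ¬ i ∈ B) = Bᶜ := by ext i; simp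
    rw [Finset.sum_ite, e1, e2]
  rw [hS B₁, hS B₂, ← Finset.sum_sub_distrib]
  have hpt : ∀ i : Fin (F+1),
      ((if i ∈ B₂ then b i * L ^ (i : ℕ) else b i * L ^ ((F+1) + (i : ℕ))) -
        (if i ∈ B₁ then b i * L ^ (i : ℕ) else b i * L ^ ((F+1) + (i : ℕ))))
      = (if i ∈ symmDiff B₁ B₂ then (L ^ (F+1) - 1) * (d i * L ^ (i : ℕ)) else 0) := by
    intro i
    by_cases h1i : i ∈ B₁ <;> by_cases h2i : i ∈ B₂ <;>
      simp only [Finset.mem_symmDiff, h1i, h2i, hbd i, if_pos, if_neg, if_true, if_false,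
        not_true, not_false_iff, true_and, and_true, false_and, and_false, or_false,
        false_or, ite_true, ite_false, pow_add] <;>
      ring
  simp_rw [hpt]
  have e3 : Finset.univ.filter (fun i => i ∈ symmDiff B₁ B₂) = symmDiff B₁ B₂ := by
    ext i; simp
  rw [← Finset.sum_filter, e3, Finset.mul_sum]

private lemma extract {F : ℕ} {L : ℤ} (hL : 2 ≤ L) (n a : ℤ) (b : Fin (F+1) → ℤ)
    (B₁ B₂ : Finset (Fin (F+1))) (hne : B₁ ≠ B₂)
    (hb : ∀ i, 1 ≤ b i ∧ b i ≤ L)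
    (hc1 : (L ^ (2*(F+1)) - 1) ∣
      (a * (L ^ (F+1) + 1) + ∑ i ∈ B₁, b i * L ^ (i : ℕ)
        + ∑ i ∈ B₁ᶜ, b i * L ^ ((F+1) + (i : ℕ))) - n)
    (hc2 : (L ^ (2*(F+1)) - 1) ∣
      (a * (L ^ (F+1) + 1) + ∑ i ∈ B₂, b i * L ^ (i : ℕ)
        + ∑ i ∈ B₂ᶜ, b i * L ^ ((F+1) + (i : ℕ))) - n) :
    ∃ (d : Fin (F+1) → ℤ) (J : Finset (Fin (F+1))),
      (∀ i, 1 ≤ |d i| ∧ |d i| ≤ L) ∧ J.Nonempty ∧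
      ((L ^ (F+1) + 1) ∣ n - ∑ i, d i * L ^ (i : ℕ)) ∧
      ((L ^ (F+1) + 1) ∣ ∑ i ∈ J, d i * L ^ (i : ℕ)) := by
  classical
  set N := L ^ (F+1) + 1 with hN
  have hq1 : (1:ℤ) < L ^ (F+1) := one_lt_pow₀ (by linarith) (Nat.succ_ne_zero F)
  have hMN : L ^ (2*(F+1)) - 1 = (L ^ (F+1) - 1) * N := by rw [two_mul, pow_add, hN]; ring
  have hNM : N ∣ L ^ (2*(F+1)) - 1 := by rw [hMN]; exact dvd_mul_left N _
  set d : Fin (F+1) → ℤ := fun i => if i ∈ B₁ then b i else -(b i) with hd_def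
  have hbd : ∀ i, d i = if i ∈ B₁ then b i else -(b i) := fun i => rfl
  refine ⟨d, symmDiff B₁ B₂, ?_, ?_, ?_, ?_⟩
  · intro i
    obtain ⟨hb1, hb2⟩ := hb i
    by_cases h : i ∈ B₁
    · rw [hbd i, if_pos h, abs_of_nonneg (by linarith)]
      exact ⟨hb1, hb2⟩
    · rw [hbd i, if_neg h, abs_neg, abs_of_nonneg (by linarith)]
      exact ⟨hb1, hb2⟩
  · rw [Finset.nonempty_iff_ne_empty]
    intro h
    exact hne (symmDiff_eq_bot.mp h)
  · have h1' : N ∣ (a * N + (∑ i ∈ B₁, b i * L ^ (i : ℕ)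
        + ∑ i ∈ B₁ᶜ, b i * L ^ ((F+1) + (i : ℕ)))) - n := by
      have := dvd_trans hNM hc1
      have e : (a * (L ^ (F+1) + 1) + ∑ i ∈ B₁, b i * L ^ (i : ℕ)
          + ∑ i ∈ B₁ᶜ, b i * L ^ ((F+1) + (i : ℕ))) - n
          = (a * N + (∑ i ∈ B₁, b i * L ^ (i : ℕ)
          + ∑ i ∈ B₁ᶜ, b i * L ^ ((F+1) + (i : ℕ)))) - n := by rw [hN]; ring
      rwa [e] at this
    rw [key1 L b B₁ d hbd] at h1'
    have e2 : n - ∑ i, d i * L ^ (i : ℕ)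
        = -((a * N + (∑ i, d i * L ^ (i : ℕ) + N * ∑ i ∈ B₁ᶜ, b i * L ^ (i : ℕ))) - n)
          + N * a + N * ∑ i ∈ B₁ᶜ, b i * L ^ (i : ℕ) := by ring
    rw [e2]
    exact dvd_add (dvd_add (dvd_neg.mpr h1') (Dvd.intro _ rfl)) (Dvd.intro _ rfl)
  · have hsub := dvd_sub hc2 hc1
    have e : (a * (L ^ (F+1) + 1) + ∑ i ∈ B₂, b i * L ^ (i : ℕ)
          + ∑ i ∈ B₂ᶜ, b i * L ^ ((F+1) + (i : ℕ))) - n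
        - ((a * (L ^ (F+1) + 1) + ∑ i ∈ B₁, b i * L ^ (i : ℕ)
          + ∑ i ∈ B₁ᶜ, b i * L ^ ((F+1) + (i : ℕ))) - n)
        = (∑ i ∈ B₂, b i * L ^ (i : ℕ) + ∑ i ∈ B₂ᶜ, b i * L ^ ((F+1) + (i : ℕ)))
          - (∑ i ∈ B₁, b i * L ^ (i : ℕ) + ∑ i ∈ B₁ᶜ, b i * L ^ ((F+1) + (i : ℕ))) := by
      ring
    rw [e, key2 L b B₁ B₂ d hbd, hMN] at hsub
    exact (mul_dvd_mul_iff_left (by linarith : L ^ (F+1) - 1 ≠ 0)).mp hsub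

private lemma buildLHS {F : ℕ} {L : ℤ} (hL : 2 ≤ L) (n : ℤ)
    (d : Fin (F+1) → ℤ) (J : Finset (Fin (F+1)))
    (hd : ∀ i, 1 ≤ |d i| ∧ |d i| ≤ L) (hJne : J.Nonempty)
    (h1 : (L ^ (F+1) + 1) ∣ n - ∑ i, d i * L ^ (i : ℕ))
    (h2 : (L ^ (F+1) + 1) ∣ ∑ i ∈ J, d i * L ^ (i : ℕ)) :
    ∃ (a : ℤ) (b : Fin (F+1) → ℤ) (B₁ B₂ : Finset (Fin (F+1))), B₁ ≠ B₂ ∧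
      (0 ≤ a ∧ a ≤ L ^ (F+1) - 2) ∧ (∀ i, 1 ≤ b i ∧ b i ≤ L) ∧
      Int.ModEq (L ^ (2*(F+1)) - 1) n (a * (L ^ (F+1) + 1)
        + ∑ i ∈ B₁, b i * L ^ (i : ℕ) + ∑ i ∈ B₁ᶜ, b i * L ^ ((F+1) + (i : ℕ))) ∧
      Int.ModEq (L ^ (2*(F+1)) - 1) n (a * (L ^ (F+1) + 1)
        + ∑ i ∈ B₂, b i * L ^ (i : ℕ) + ∑ i ∈ B₂ᶜ, b i * L ^ ((F+1) + (i : ℕ))) := by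
  classical
  set N := L ^ (F+1) + 1 with hN
  have hq1 : (1:ℤ) < L ^ (F+1) := one_lt_pow₀ (by linarith) (Nat.succ_ne_zero F)
  have hMN : L ^ (2*(F+1)) - 1 = (L ^ (F+1) - 1) * N := by rw [two_mul, pow_add, hN]; ring
  set b : Fin (F+1) → ℤ := fun i => |d i| with hb_def
  set B₁ : Finset (Fin (F+1)) := Finset.univ.filter (fun i => 0 < d i) with hB₁
  set B₂ : Finset (Fin (F+1)) := symmDiff B₁ J with hB₂
  have hbd : ∀ i, d i = if i ∈ B₁ then b i else -(b i) := by
    intro i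
    by_cases h : i ∈ B₁
    · rw [if_pos h]
      have hpos : 0 < d i := (Finset.mem_filter.mp h).2
      rw [hb_def]
      exact (abs_of_pos hpos).symm
    · rw [if_neg h]
      have hneg : d i < 0 := by
        have h0 : ¬ 0 < d i := fun hc => h (Finset.mem_filter.mpr ⟨Finset.mem_univ i, hc⟩)
        have h1i := (hd i).1
        rcases lt_trichotomy (d i) 0 with h' | h' | h'
        · exact h'
        · exfalso; rw [h'] at h1i; simp at h1i
        · exact absurd h' h0
      rw [hb_def]
      simp only
      rw [abs_of_neg hneg]
      ring
  set S₁ := ∑ i ∈ B₁, b i * L ^ (i : ℕ) + ∑ i ∈ B₁ᶜ, b i * L ^ ((F+1) + (i : ℕ)) with hS₁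
  set S₂ := ∑ i ∈ B₂, b i * L ^ (i : ℕ) + ∑ i ∈ B₂ᶜ, b i * L ^ ((F+1) + (i : ℕ)) with hS₂
  have hNS : N ∣ n - S₁ := by
    have e : n - S₁ = (n - ∑ i, d i * L ^ (i : ℕ))
        - N * ∑ i ∈ B₁ᶜ, b i * L ^ (i : ℕ) := by
      rw [hS₁, key1 L b B₁ d hbd, hN]; ring
    rw [e]
    exact dvd_sub h1 (Dvd.intro _ rfl)
  obtain ⟨w, hw⟩ := hNS
  set a := w % (L ^ (F+1) - 1) with ha_def
  have ha0 : 0 ≤ a := Int.emod_nonneg w (by linarith)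
  have ha1 : a < L ^ (F+1) - 1 := Int.emod_lt_of_pos w (by linarith)
  obtain ⟨s, hs⟩ : L ^ (F+1) - 1 ∣ w - a :=
    ⟨w / (L ^ (F+1) - 1), by rw [ha_def, Int.emod_def]; ring⟩
  obtain ⟨u, hu⟩ := h2
  have hkey2 : S₂ - S₁ = (L ^ (F+1) - 1) * ∑ i ∈ J, d i * L ^ (i : ℕ) := by
    rw [hS₁, hS₂, hB₂]
    have hk := key2 L b B₁ (symmDiff B₁ J) d hbd
    rwa [symmDiff_symmDiff_cancel_left] at hk
  have hdvd1 : (L ^ (2*(F+1)) - 1) ∣ (a * N + S₁) - n := by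
    refine ⟨-s, ?_⟩
    rw [hMN]
    linear_combination (-(N:ℤ)) * hs - hw
  have hdvd2 : (L ^ (2*(F+1)) - 1) ∣ (a * N + S₂) - n := by
    have e : (a * N + S₂) - n = ((a * N + S₁) - n) + (S₂ - S₁) := by ring
    rw [e]
    refine dvd_add hdvd1 ?_
    rw [hkey2, hu, hMN]
    exact ⟨u, by ring⟩
  refine ⟨a, b, B₁, B₂, ?_, ⟨ha0, by linarith⟩, ?_, ?_, ?_⟩
  · intro h
    rw [hB₂] at h
    have he : J = ⊥ := symmDiff_eq_left.mp h.symm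
    rw [Finset.nonempty_iff_ne_empty] at hJne
    exact hJne he
  · intro i
    exact ⟨(hd i).1, (hd i).2⟩
  · rw [Int.modEq_iff_dvd]
    have e : (a * (L ^ (F+1) + 1) + ∑ i ∈ B₁, b i * L ^ (i : ℕ)
        + ∑ i ∈ B₁ᶜ, b i * L ^ ((F+1) + (i : ℕ))) - n = (a * N + S₁) - n := by
      rw [hS₁, hN]; ring
    rw [e]
    exact hdvd1
  · rw [Int.modEq_iff_dvd]
    have e : (a * (L ^ (F+1) + 1) + ∑ i ∈ B₂, b i * L ^ (i : ℕ)
        + ∑ i ∈ B₂ᶜ, b i * L ^ ((F+1) + (i : ℕ))) - n = (a * N + S₂) - n := by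
      rw [hS₂, hN]; ring
    rw [e]
    exact hdvd2

private lemma pairJ {F : ℕ} {L : ℤ} (hL : 2 ≤ L) (d : Fin (F+1) → ℤ) (J : Finset (Fin (F+1)))
    (hd : ∀ i, 1 ≤ |d i| ∧ |d i| ≤ L) (hJne : J.Nonempty)
    (h2 : (L ^ (F+1) + 1) ∣ ∑ i ∈ J, d i * L ^ (i : ℕ)) :
    ∃ i₀ : Fin (F+1), i₀ ∈ J ∧ i₀ + 1 ∈ J := by
  classical
  set N := L ^ (F+1) + 1 with hN
  set D := ∑ i ∈ J, d i * L ^ (i : ℕ) with hD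
  have hq1 : (1:ℤ) < L ^ (F+1) := one_lt_pow₀ (by linarith) (Nat.succ_ne_zero F)
  have hNpos : (0:ℤ) < N := by rw [hN]; linarith
  have hDb : (L - 1) * |D| ≤ L ^ ((F+1)+1) - L := by
    have hb1 : |D| ≤ ∑ i ∈ J, L ^ ((i : ℕ) + 1) := abs_sum_le' hL d (fun i => (hd i).2) J
    have hb2 : ∑ i ∈ J, L ^ ((i : ℕ) + 1) ≤ ∑ j ∈ Finset.range (F+1), L ^ (j + 1) :=
      sum_pow_le hL J (F+1) (fun i _ => i.isLt)
    rw [← geom L (F+1)]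
    exact mul_le_mul_of_nonneg_left (hb1.trans hb2) (by linarith)
  obtain ⟨c, hc⟩ := h2
  have habs : |D| = N * |c| := by rw [hc, abs_mul, abs_of_pos hNpos]
  have hcle : |c| ≤ 1 := by
    by_contra hcon
    push_neg at hcon
    have h2c : 2 ≤ |c| := hcon
    have hpow : L ^ ((F+1)+1) = L * L ^ (F+1) := by rw [pow_succ]; ring
    have hDge0 : 2 * N ≤ |D| := by
      rw [habs]
      have := mul_le_mul_of_nonneg_left h2c (le_of_lt hNpos)
      linarith
    have hDge : (L - 1) * (2 * N) ≤ (L - 1) * |D| :=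
      mul_le_mul_of_nonneg_left hDge0 (by linarith)
    have hLX : 2 * L ^ (F+1) ≤ L * L ^ (F+1) :=
      mul_le_mul_of_nonneg_right hL (by linarith)
    rw [hpow] at hDb
    rw [hN] at hDge
    linarith
  -- the ± N case
  have hpm : |D| = N → ∃ i₀ : Fin (F+1), i₀ ∈ J ∧ i₀ + 1 ∈ J := by
    intro hDN
    have h0 : (0 : Fin (F+1)) ∈ J := by
      by_contra h0
      have hLD : L ∣ D := by
        rw [hD]
        apply Finset.dvd_sum
        intro i hi
        have : (i : ℕ) ≠ 0 := by
          intro hcon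
          exact h0 (by rwa [show i = 0 from Fin.ext (by simpa using hcon)] at hi)
        exact Dvd.dvd.mul_left (dvd_pow_self L this) (d i)
      have hL1 : L ∣ (1:ℤ) := by
        have e : (1:ℤ) = |D| - L ^ (F+1) := by rw [hDN, hN]; ring
        rw [e]
        exact dvd_sub ((dvd_abs L D).mpr hLD) (dvd_pow_self L (Nat.succ_ne_zero F))
      have := Int.le_of_dvd (by norm_num) hL1
      linarith
    have hlast : Fin.last F ∈ J := by
      by_contra hl
      have hvals : ∀ i ∈ J, (i : ℕ) < F := by
        intro i hi
        have h1 : (i : ℕ) ≤ F := Nat.lt_succ_iff.mp i.isLt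
        have h2' : (i : ℕ) ≠ F := by
          intro hcon
          exact hl (by rwa [show i = Fin.last F from Fin.ext (by simpa using hcon)] at hi)
        omega
      have hb1 : |D| ≤ ∑ i ∈ J, L ^ ((i : ℕ) + 1) := abs_sum_le' hL d (fun i => (hd i).2) J
      have hb2 : ∑ i ∈ J, L ^ ((i : ℕ) + 1) ≤ ∑ j ∈ Finset.range F, L ^ (j + 1) :=
        sum_pow_le hL J F hvals
      have hb3 : (L - 1) * |D| ≤ L ^ (F+1) - L := by
        rw [← geom L F]
        exact mul_le_mul_of_nonneg_left (hb1.trans hb2) (by linarith)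
      rw [hDN, hN] at hb3
      nlinarith
    refine ⟨Fin.last F, hlast, ?_⟩
    rw [Fin.last_add_one]
    exact h0
  obtain ⟨hcb1, hcb2⟩ := abs_le.mp hcle
  interval_cases c
  · exact hpm (by rw [habs]; norm_num)
  · -- c = 0 : D = 0
    have hD0 : D = 0 := by rw [hc]; ring
    set p := J.min' hJne with hp_def
    have hp : p ∈ J := J.min'_mem hJne
    refine ⟨p, hp, ?_⟩
    by_contra hnot
    have hdvd : L ^ ((p : ℕ) + 2) ∣ ∑ i ∈ J.erase p, d i * L ^ (i : ℕ) := by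
      apply Finset.dvd_sum
      intro i hi
      have hiJ : i ∈ J := Finset.mem_of_mem_erase hi
      have hip : i ≠ p := Finset.ne_of_mem_erase hi
      have hge : (p : ℕ) ≤ (i : ℕ) := J.min'_le i hiJ
      have hne0 : (i : ℕ) ≠ (p : ℕ) := fun h => hip (Fin.ext h)
      have hne1 : (i : ℕ) ≠ (p : ℕ) + 1 := by
        intro h
        have hlt : (p : ℕ) + 1 < F + 1 := h ▸ i.isLt
        have hplast : p ≠ Fin.last F := by
          intro hcon
          rw [hcon] at hlt
          simp [Fin.val_last] at hlt
        have : ((p + 1 : Fin (F+1)) : ℕ) = (p : ℕ) + 1 := by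
          rw [Fin.val_add_one, if_neg hplast]
        exact hnot (by rwa [show i = p + 1 from Fin.ext (by rw [this, h])] at hiJ)
      have : (p : ℕ) + 2 ≤ (i : ℕ) := by omega
      exact Dvd.dvd.mul_left (pow_dvd_pow L this) (d i)
    have hdp : L ^ ((p : ℕ) + 2) ∣ d p * L ^ (p : ℕ) := by
      have e : d p * L ^ (p : ℕ) = D - ∑ i ∈ J.erase p, d i * L ^ (i : ℕ) := by
        rw [hD, ← Finset.add_sum_erase J _ hp]
        ring
      rw [e, hD0, zero_sub]
      exact dvd_neg.mpr hdvd
    have hL2dvd : L ^ 2 ∣ d p := by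
      have e : L ^ ((p : ℕ) + 2) = L ^ (p : ℕ) * L ^ 2 := by rw [pow_add]
      rw [e, mul_comm (d p) (L ^ (p : ℕ))] at hdp
      exact (mul_dvd_mul_iff_left (pow_ne_zero (p : ℕ) (by linarith : L ≠ 0))).mp hdp
    have hle : L ^ 2 ≤ |d p| :=
      Int.le_of_dvd (by linarith [(hd p).1]) ((dvd_abs _ _).mpr hL2dvd)
    have := (hd p).2
    nlinarith
  · exact hpm (by rw [habs]; norm_num)

/-- For `n` not divisible by `ℓ^f + 1`: there exist `a`, `b` and distinct
`B₁ ≠ B₂` with `(a,b,B₁), (a,b,B₂) ∈ T(n)` iff there exist integers `r ≥ 0`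
and `m` with `(ℓ−1)|m| ≤ ℓ^{f−1} − ℓ` such that
`ℓ^r n ≡ m (mod ℓ^f + 1)`. -/
theorem stmt10 (ℓ f : ℕ) (hℓ : ℓ.Prime) (hf : 0 < f) (n : ℤ)
    (hn : ¬ ((ℓ : ℤ) ^ f + 1) ∣ n) :
    (∃ (a : ℤ) (b : Fin f → ℤ) (B₁ B₂ : Finset (Fin f)), B₁ ≠ B₂ ∧
      (a, b, B₁) ∈ Tset ℓ f n ∧ (a, b, B₂) ∈ Tset ℓ f n) ↔
    (∃ (r : ℕ) (m : ℤ), ((ℓ : ℤ) - 1) * |m| ≤ (ℓ : ℤ) ^ (f - 1) - (ℓ : ℤ) ∧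
      Int.ModEq ((ℓ : ℤ) ^ f + 1) ((ℓ : ℤ) ^ r * n) m) := by
  classical
  have hL : (2:ℤ) ≤ (ℓ:ℤ) := by exact_mod_cast hℓ.two_le
  obtain ⟨F, rfl⟩ : ∃ F, f = F + 1 := ⟨f - 1, by omega⟩
  have hcop : IsCoprime ((ℓ:ℤ)) ((ℓ:ℤ) ^ (F+1) + 1) := ⟨-(ℓ:ℤ)^F, 1, by ring⟩
  have hMN : (ℓ:ℤ) ^ (2*(F+1)) - 1 = ((ℓ:ℤ) ^ (F+1) - 1) * ((ℓ:ℤ) ^ (F+1) + 1) := by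
    rw [two_mul, pow_add]; ring
  constructor
  · rintro ⟨a, b, B₁, B₂, hne, hm1, hm2⟩
    obtain ⟨⟨ha0, ha1⟩, hb, hc1⟩ := hm1
    obtain ⟨-, -, hc2⟩ := hm2
    rw [Int.modEq_iff_dvd] at hc1 hc2
    obtain ⟨d, J, hd, hJne, h1, h2⟩ := extract hL n a b B₁ B₂ hne hb hc1 hc2
    obtain ⟨i₀, hi₀, hi₁⟩ := pairJ hL d J hd hJne h2
    set r := 2*F - (i₀ : ℕ) with hr
    obtain ⟨d', hd', h1', h2'⟩ := rotIter r n d J hd h1 h2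
    set J' := J.image (· + ((r:ℕ) : Fin (F+1))) with hJ'
    set i' := i₀ + ((r:ℕ) : Fin (F+1)) with hi'_def
    have hi₀' : i' ∈ J' := Finset.mem_image_of_mem _ hi₀
    have hi₁' : i' + 1 ∈ J' := by
      have e : (fun x => x + ((r:ℕ) : Fin (F+1))) (i₀ + 1) = i' + 1 := by
        rw [hi'_def]; exact add_right_comm _ _ _
      rw [← e]
      exact Finset.mem_image_of_mem _ hi₁
    have hval1 : (i' : ℕ) = F - 1 := by
      rw [hi'_def, Fin.val_add, Fin.val_natCast, Nat.add_mod_mod]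
      have e1 : (i₀ : ℕ) + r = 2*F := by
        have := i₀.isLt
        omega
      rw [e1]
      rcases Nat.eq_zero_or_pos F with h | h
      · subst h; rfl
      · have e2 : 2*F = (F - 1) + 1*(F+1) := by omega
        rw [e2, Nat.add_mul_mod_self_right, Nat.mod_eq_of_lt (by omega)]
    have hval2 : ((i' + 1 : Fin (F+1)) : ℕ) = F := by
      rcases Nat.eq_zero_or_pos F with h | h
      · subst h
        have := (i' + 1).isLt
        omega
      · have hne' : i' ≠ Fin.last F := by
          intro hcon
          rw [hcon] at hval1
          simp only [Fin.val_last] at hval1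
          omega
        rw [Fin.val_add_one, if_neg hne', hval1]
        omega
    set m := ∑ i ∈ J'ᶜ, d' i * (ℓ:ℤ) ^ (i : ℕ) with hm
    have hmdvd : ((ℓ:ℤ) ^ (F+1) + 1) ∣ (ℓ:ℤ) ^ r * n - m := by
      have e : (ℓ:ℤ) ^ r * n - m = ((ℓ:ℤ) ^ r * n - ∑ i, d' i * (ℓ:ℤ) ^ (i : ℕ))
          + ∑ i ∈ J', d' i * (ℓ:ℤ) ^ (i : ℕ) := by
        rw [hm, ← Finset.sum_add_sum_compl J' (fun i => d' i * (ℓ:ℤ) ^ (i : ℕ))]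
        ring
      rw [e]
      exact dvd_add h1' h2'
    by_cases hm0 : m = 0
    · exfalso
      apply hn
      have hdn : ((ℓ:ℤ) ^ (F+1) + 1) ∣ (ℓ:ℤ) ^ r * n := by
        have e : (ℓ:ℤ) ^ r * n = (ℓ:ℤ) ^ r * n - m := by rw [hm0]; ring
        rw [e]
        exact hmdvd
      exact (hcop.pow_left).symm.dvd_of_dvd_mul_left hdn
    · have hFne : J'ᶜ.Nonempty := by
        rw [Finset.nonempty_iff_ne_empty]
        intro h
        apply hm0
        rw [hm, h, Finset.sum_empty]
      have hvals : ∀ i ∈ J'ᶜ, (i : ℕ) < F - 1 := by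
        intro i hi
        have hiJ : i ∉ J' := Finset.mem_compl.mp hi
        have hne1 : i ≠ i' := fun h => hiJ (h ▸ hi₀')
        have hne2 : i ≠ i' + 1 := fun h => hiJ (h ▸ hi₁')
        have hv1 : (i : ℕ) ≠ F - 1 := fun h => hne1 (Fin.ext (by rw [h, hval1]))
        have hv2 : (i : ℕ) ≠ F := fun h => hne2 (Fin.ext (by rw [h, hval2]))
        have := i.isLt
        omega
      obtain ⟨iw, hiw⟩ := hFne
      have hF2 : 2 ≤ F := by
        have := hvals iw hiw
        omega
      refine ⟨r, m, ?_, ?_⟩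
      · have hb1 : |m| ≤ ∑ i ∈ J'ᶜ, (ℓ:ℤ) ^ ((i : ℕ) + 1) :=
          abs_sum_le' hL d' (fun i => (hd' i).2) J'ᶜ
        have hb2 : ∑ i ∈ J'ᶜ, (ℓ:ℤ) ^ ((i : ℕ) + 1) ≤ ∑ j ∈ range (F-1), (ℓ:ℤ) ^ (j + 1) :=
          sum_pow_le hL J'ᶜ (F-1) hvals
        have hb3 : ((ℓ:ℤ) - 1) * |m| ≤ (ℓ:ℤ) ^ ((F-1)+1) - (ℓ:ℤ) := by
          rw [← geom (ℓ:ℤ) (F-1)]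
          exact mul_le_mul_of_nonneg_left (hb1.trans hb2) (by linarith)
        have e : (F-1)+1 = (F+1) - 1 := by omega
        rwa [e] at hb3
      · rw [Int.modEq_iff_dvd]
        have e : m - (ℓ:ℤ) ^ r * n = -((ℓ:ℤ) ^ r * n - m) := by ring
        rw [e]
        exact dvd_neg.mpr hmdvd
  · rintro ⟨r, m, hbnd, hmod⟩
    rw [Int.modEq_iff_dvd] at hmod
    have hm0 : m ≠ 0 := by
      rintro rfl
      apply hn
      have hdn : ((ℓ:ℤ) ^ (F+1) + 1) ∣ (ℓ:ℤ) ^ r * n := by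
        have e : (ℓ:ℤ) ^ r * n = -((0:ℤ) - (ℓ:ℤ) ^ r * n) := by ring
        rw [e]
        exact dvd_neg.mpr hmod
      exact (hcop.pow_left).symm.dvd_of_dvd_mul_left hdn
    have hm1 : 1 ≤ |m| := Int.one_le_abs hm0
    have hF2 : 2 ≤ F := by
      by_contra hcon
      push_neg at hcon
      interval_cases F
      · simp only [Nat.zero_add, Nat.sub_self, pow_zero] at hbnd
        nlinarith
      · simp only [show (1+1) - 1 = 1 from rfl, pow_one] at hbnd
        nlinarith
    obtain ⟨k, rfl⟩ : ∃ k, F = k + 2 := ⟨F - 2, by omega⟩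
    have hdig := digits hL ((k+2)-1) (by omega) m hm1 (by
      have e : ((k+2)-1)+1 = ((k+2)+1) - 1 := by omega
      rw [e]
      exact hbnd)
    obtain ⟨dg, hdg, hdgsum⟩ := hdig
    set d : Fin (k+3) → ℤ := fun i =>
      if (i : ℕ) = k+2 then -1 else if (i : ℕ) = k+1 then (ℓ:ℤ) else dg (i : ℕ) with hd_def
    have hdb : ∀ i, 1 ≤ |d i| ∧ |d i| ≤ (ℓ:ℤ) := by
      intro i
      rw [hd_def]
      simp only
      by_cases h1 : (i : ℕ) = k+2
      · rw [if_pos h1]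
        rw [abs_neg, abs_one]
        exact ⟨le_refl 1, by linarith⟩
      · rw [if_neg h1]
        by_cases h2 : (i : ℕ) = k+1
        · rw [if_pos h2, abs_of_nonneg (by linarith)]
          exact ⟨by linarith, le_refl _⟩
        · rw [if_neg h2]
          exact hdg (i : ℕ)
    have hdsum : ∑ i : Fin (k+3), d i * (ℓ:ℤ) ^ (i : ℕ) = m := by
      have e : ∑ i : Fin (k+3), d i * (ℓ:ℤ) ^ (i : ℕ)
          = ∑ j ∈ range (k+3),
              (if j = k+2 then (-1:ℤ) else if j = k+1 then (ℓ:ℤ) else dg j) * (ℓ:ℤ) ^ j :=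
        Fin.sum_univ_eq_sum_range
          (fun j => (if j = k+2 then (-1:ℤ) else if j = k+1 then (ℓ:ℤ) else dg j) * (ℓ:ℤ) ^ j)
          (k+3)
      rw [e, Finset.sum_range_succ, Finset.sum_range_succ]
      have e1 : ∑ j ∈ range (k+1),
          (if j = k+2 then (-1:ℤ) else if j = k+1 then (ℓ:ℤ) else dg j) * (ℓ:ℤ) ^ j
          = ∑ j ∈ range (k+1), dg j * (ℓ:ℤ) ^ j := by
        apply Finset.sum_congr rfl
        intro j hj
        have hjk := Finset.mem_range.mp hj
        rw [if_neg (by omega : j ≠ k+2), if_neg (by omega : j ≠ k+1)]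
      rw [e1]
      have e2 : ∑ j ∈ range (k+1), dg j * (ℓ:ℤ) ^ j = m := by
        have : (k+2)-1 = k+1 := by omega
        rw [← this]
        exact hdgsum
      rw [e2, if_neg (by omega : k+1 ≠ k+2), if_pos rfl, if_pos rfl]
      have e3 : (ℓ:ℤ) * (ℓ:ℤ)^(k+1) = (ℓ:ℤ)^(k+2) := by rw [pow_succ]; ring
      rw [e3]
      ring
    set i₁ : Fin (k+3) := ⟨k+1, by omega⟩ with hi₁def
    set i₂ : Fin (k+3) := ⟨k+2, by omega⟩ with hi₂def
    set J : Finset (Fin (k+3)) := {i₁, i₂} with hJdef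
    have hJsum : ∑ i ∈ J, d i * (ℓ:ℤ) ^ (i : ℕ) = 0 := by
      have hne12 : i₁ ≠ i₂ := by
        intro h
        have h2 := congrArg Fin.val h
        rw [hi₁def, hi₂def] at h2
        simp at h2
      rw [hJdef, Finset.sum_pair hne12]
      have ed1 : d i₁ = (ℓ:ℤ) := by rw [hd_def, hi₁def]; simp
      have ed2 : d i₂ = -1 := by rw [hd_def, hi₂def]; simp
      have hv1 : (i₁ : ℕ) = k+1 := rfl
      have hv2 : (i₂ : ℕ) = k+2 := rfl
      rw [ed1, ed2, hv1, hv2, pow_succ ((ℓ:ℤ)) (k+1)]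
      ring
    have h1base : ((ℓ:ℤ) ^ ((k+2)+1) + 1) ∣ m - ∑ i : Fin (k+3), d i * (ℓ:ℤ) ^ (i : ℕ) := by
      rw [hdsum]
      simp
    have h2base : ((ℓ:ℤ) ^ ((k+2)+1) + 1) ∣ ∑ i ∈ J, d i * (ℓ:ℤ) ^ (i : ℕ) := by
      rw [hJsum]
      exact dvd_zero _
    set t := 2*((k+2)+1)*(r+1) - r with ht
    have hge : r ≤ 2*((k+2)+1)*(r+1) := by
      have h1 : r + 1 ≤ 2*((k+2)+1) * (r+1) := Nat.le_mul_of_pos_left (r+1) (by omega)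
      omega
    obtain ⟨d₂, hd₂, h21, h22⟩ := rotIter t m d J hdb h1base h2base
    have htr : ((ℓ:ℤ) ^ ((k+2)+1) + 1) ∣ n - (ℓ:ℤ) ^ t * m := by
      have d1 : ((ℓ:ℤ) ^ ((k+2)+1) + 1) ∣ (ℓ:ℤ) ^ t * m - (ℓ:ℤ) ^ (t+r) * n := by
        have e : (ℓ:ℤ) ^ t * m - (ℓ:ℤ) ^ (t+r) * n = (ℓ:ℤ) ^ t * (m - (ℓ:ℤ) ^ r * n) := by
          rw [pow_add]; ring
        rw [e]
        exact hmod.mul_left _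
      have d2 : ((ℓ:ℤ) ^ ((k+2)+1) + 1) ∣ (ℓ:ℤ) ^ (t+r) * n - n := by
        have e : (ℓ:ℤ) ^ (t+r) * n - n = (((ℓ:ℤ) ^ (2*((k+2)+1))) ^ (r+1) - 1 ^ (r+1)) * n := by
          rw [← pow_mul, one_pow]
          have e2 : t + r = 2*((k+2)+1)*(r+1) := by omega
          rw [e2]
          ring
        rw [e]
        refine Dvd.dvd.mul_right ?_ n
        refine dvd_trans ?_ (sub_dvd_pow_sub_pow _ _ (r+1))
        rw [hMN]
        exact dvd_mul_left _ _
      have e : n - (ℓ:ℤ) ^ t * m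
          = -((ℓ:ℤ) ^ t * m - (ℓ:ℤ) ^ (t+r) * n) - ((ℓ:ℤ) ^ (t+r) * n - n) := by ring
      rw [e]
      exact dvd_sub (dvd_neg.mpr d1) d2
    have h1n : ((ℓ:ℤ) ^ ((k+2)+1) + 1) ∣ n - ∑ i : Fin (k+3), d₂ i * (ℓ:ℤ) ^ (i : ℕ) := by
      have e : n - ∑ i : Fin (k+3), d₂ i * (ℓ:ℤ) ^ (i : ℕ)
          = (n - (ℓ:ℤ) ^ t * m) + ((ℓ:ℤ) ^ t * m - ∑ i : Fin (k+3), d₂ i * (ℓ:ℤ) ^ (i : ℕ)) := by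
        ring
      rw [e]
      exact dvd_add htr h21
    have hJ₂ne : (J.image (· + ((t:ℕ) : Fin (k+3)))).Nonempty := by
      apply Finset.Nonempty.image
      rw [hJdef]
      exact Finset.insert_nonempty _ _
    obtain ⟨a, b, B₁, B₂, hBne, hA, hB, hM1, hM2⟩ :=
      buildLHS hL n d₂ (J.image (· + ((t:ℕ) : Fin (k+3)))) hd₂ hJ₂ne h1n h22
    exact ⟨a, b, B₁, B₂, hBne, ⟨hA, hB, hM1⟩, ⟨hA, hB, hM2⟩⟩

end Stmt10
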